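/- arXiv:1404.2730 — 2 statements merged into one kernel-verified Lean document; each statement's English description precedes it below -/
import Mathlib

section
/- Let r ≥ 1, let f be a homogeneous polynomial of degree r+1 on ℝ^N × ℝ^N, and let F = f^⊕ be the cyclically symmetric Hamiltonian generated by f. Then ‖X_F‖_op ≤ |X_F|_1, and this holds both when the operator norm is taken with respect to the Euclidean (ℓ²) norm and when it is taken with respect to the supremum (ℓ^∞) norm on ℝ^{2N}. -/
open MvPolynomial Finset Real

/-- index set for the `2N` variables: `inl j` ↦ `x_j`, `inr j` ↦ `y_j` (indices mod `N`). -/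
abbrev Idx (N : ℕ) := Fin N ⊕ Fin N

open Fin.CommRing in
/-- the cyclic shift `τ^s` (`s ∈ ℤ`) acting on polynomials: `τ^s X_j = X_{j+s}`
(indices mod `N`), separately on the `x` and `y` variables, so that
`(τ^s f)(x,y) = f(τ^s x, τ^s y)`. -/
noncomputable def tauPow (N : ℕ) [NeZero N] (s : ℤ) (f : MvPolynomial (Idx N) ℝ) :
    MvPolynomial (Idx N) ℝ :=
  rename (Sum.map (· + (s : Fin N)) (· + (s : Fin N))) f

/-- `f ↦ f^⊕ := ∑_{l=1}^N τ^l f`. -/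
noncomputable def oplus (N : ℕ) [NeZero N] (f : MvPolynomial (Idx N) ℝ) :
    MvPolynomial (Idx N) ℝ :=
  ∑ l ∈ Finset.range N, tauPow N ((l : ℤ) + 1) f

/-- the polynomial norm `‖f‖_R`; for a homogeneous polynomial of degree `s` it equals
`R^s ∑_{|j|+|k|=s} |f_{j,k}|`. -/
noncomputable def pnorm {N : ℕ} (R : ℝ) (f : MvPolynomial (Idx N) ℝ) : ℝ :=
  ∑ d ∈ f.support, |f.coeff d| * R ^ (d.sum fun _ e => e)

/-- the Poisson bracket `{f,g} = ∑_j (∂f/∂x_j ∂g/∂y_j − ∂f/∂y_j ∂g/∂x_j)`. -/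
noncomputable def poisson (N : ℕ) (f g : MvPolynomial (Idx N) ℝ) : MvPolynomial (Idx N) ℝ :=
  ∑ j : Fin N,
    (pderiv (Sum.inl j) f * pderiv (Sum.inr j) g - pderiv (Sum.inr j) f * pderiv (Sum.inl j) g)

/-- the norm `|X_F|_R := ‖X_1‖_R + ‖X_{N+1}‖_R` of the Hamiltonian vector field
`X_F = J∇F` (here `X_1 = ∂F/∂y_1` and `X_{N+1} = −∂F/∂x_1`). -/
noncomputable def hamNorm (N : ℕ) [NeZero N] (R : ℝ) (F : MvPolynomial (Idx N) ℝ) : ℝ :=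
  pnorm R (pderiv (Sum.inr 0) F) + pnorm R (-pderiv (Sum.inl 0) F)

/-- the Hamiltonian vector field `X_F = J∇F` as a map on the phase space `ℝ^{2N}`:
`ẋ_j = ∂F/∂y_j`, `ẏ_j = −∂F/∂x_j`. -/
noncomputable def Xvec (N : ℕ) (F : MvPolynomial (Idx N) ℝ) (z : Idx N → ℝ) : Idx N → ℝ :=
  Sum.elim (fun j => eval z (pderiv (Sum.inr j) F)) (fun j => -eval z (pderiv (Sum.inl j) F))

/-- the euclidean (`ℓ²`) norm on `ℝ^{2N}`; the supremum (`ℓ^∞`) norm is the `Pi` norm `‖·‖`. -/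
noncomputable def enorm {N : ℕ} (z : Idx N → ℝ) : ℝ :=
  Real.sqrt (∑ l, z l ^ 2)

section AuxLemmas
set_option linter.unusedSectionVars false
set_option linter.unusedVariables false
set_option linter.deprecated false

variable {N : ℕ} [NeZero N]

/-- the shift by `t` on the index set. -/
private def shf {N : ℕ} (t : Fin N) : Idx N → Idx N := Sum.map (· + t) (· + t)

private lemma shf_injective (t : Fin N) : Function.Injective (shf t) :=
  Function.Injective.sumMap (add_left_injective t) (add_left_injective t)

private lemma shf_comp (s t : Fin N) : shf s ∘ shf t = shf (t + s) := by
  funext x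
  cases x <;> simp [shf, add_assoc]

private lemma shf_inl (j a : Fin N) : shf j (Sum.inl a) = Sum.inl (a + j) := rfl
private lemma shf_inr (j a : Fin N) : shf j (Sum.inr a) = Sum.inr (a + j) := rfl

open Fin.CommRing in
private lemma oplus_eq (f : MvPolynomial (Idx N) ℝ) :
    oplus N f = ∑ t : Fin N, rename (shf t) f := by
  have h1 : ∀ l : ℕ, tauPow N ((l : ℤ) + 1) f = rename (shf ((l : Fin N) + 1)) f := by
    intro l
    unfold tauPow shf
    push_cast
    rfl
  rw [oplus]
  simp only [h1]
  rw [← Fin.sum_univ_eq_sum_range (fun l : ℕ => rename (shf ((l : Fin N) + 1)) f) N]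
  simp only [Fin.cast_val_eq_self]
  exact Equiv.sum_comp (Equiv.addRight (1 : Fin N)) (fun t => rename (shf t) f)

private lemma oplus_shift (f : MvPolynomial (Idx N) ℝ) (s : Fin N) :
    rename (shf s) (oplus N f) = oplus N f := by
  rw [oplus_eq, map_sum]
  simp only [rename_rename, shf_comp]
  exact Equiv.sum_comp (Equiv.addRight s) (fun t => rename (shf t) f)

private lemma pderiv_oplus_inr (f : MvPolynomial (Idx N) ℝ) (j : Fin N) :
    pderiv (Sum.inr j) (oplus N f) = rename (shf j) (pderiv (Sum.inr 0) (oplus N f)) := by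
  conv_lhs => rw [← oplus_shift f j]
  have h := pderiv_rename (shf_injective j) (Sum.inr (0 : Fin N)) (oplus N f)
  rwa [shf_inr, zero_add] at h

private lemma pderiv_oplus_inl (f : MvPolynomial (Idx N) ℝ) (j : Fin N) :
    -pderiv (Sum.inl j) (oplus N f) = rename (shf j) (-pderiv (Sum.inl 0) (oplus N f)) := by
  rw [map_neg]
  congr 1
  conv_lhs => rw [← oplus_shift f j]
  have h := pderiv_rename (shf_injective j) (Sum.inl (0 : Fin N)) (oplus N f)
  rwa [shf_inl, zero_add] at h

private lemma oplus_homog {f : MvPolynomial (Idx N) ℝ} {n : ℕ} (hf : f.IsHomogeneous n) :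
    (oplus N f).IsHomogeneous n := by
  rw [oplus_eq]
  exact MvPolynomial.IsHomogeneous.sum _ _ _ fun t _ => hf.rename_isHomogeneous

omit [NeZero N] in
private lemma deg_univ (e : Idx N →₀ ℕ) : e.degree = ∑ k : Idx N, e k := by
  rw [Finsupp.degree]
  exact Finset.sum_subset (Finset.subset_univ _) fun k _ hk =>
    Finsupp.notMem_support_iff.mp hk

private lemma support_degree {g : MvPolynomial (Idx N) ℝ} {m : ℕ} (hg : g.IsHomogeneous m)
    {d : Idx N →₀ ℕ} (hd : d ∈ g.support) : ∑ i : Idx N, d i = m := by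
  rw [← deg_univ, Finsupp.degree_eq_weight_one]
  exact hg (MvPolynomial.mem_support_iff.mp hd)

private lemma pderiv_homog {p : MvPolynomial (Idx N) ℝ} {n : ℕ} (i : Idx N)
    (hp : p.IsHomogeneous (n + 1)) : (MvPolynomial.pderiv i p).IsHomogeneous n := by
  conv_lhs => rw [← p.support_sum_monomial_coeff]
  rw [map_sum]
  apply MvPolynomial.IsHomogeneous.sum
  intro d hd
  rw [pderiv_monomial]
  rcases eq_or_ne (d i) 0 with h | h
  · rw [h]
    norm_num
    exact isHomogeneous_zero _ _ _
  · apply isHomogeneous_monomial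
    have hle : Finsupp.single i 1 ≤ d := by
      rw [Finsupp.single_le_iff]
      omega
    have hadd : (d - Finsupp.single i 1) + Finsupp.single i 1 = d := tsub_add_cancel_of_le hle
    have hdeg : ∑ k : Idx N, d k = n + 1 := support_degree hp hd
    rw [deg_univ]
    have hk : ∀ k, ((d - Finsupp.single i 1 : Idx N →₀ ℕ)) k + (Finsupp.single i 1) k = d k := by
      intro k
      rw [← Finsupp.add_apply, hadd]
    have hsum : (∑ k : Idx N, ((d - Finsupp.single i 1 : Idx N →₀ ℕ)) k) + ∑ k : Idx N, (Finsupp.single i 1) k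
        = ∑ k : Idx N, d k := by
      rw [← Finset.sum_add_distrib]
      exact Finset.sum_congr rfl fun k _ => hk k
    have hone : ∑ k : Idx N, (Finsupp.single i 1) k = 1 := by
      simp [Finsupp.single_apply]
    omega

private lemma pnorm_one (g : MvPolynomial (Idx N) ℝ) :
    pnorm 1 g = ∑ d ∈ g.support, |g.coeff d| := by
  unfold pnorm
  simp

private lemma pnorm_one_nonneg (g : MvPolynomial (Idx N) ℝ) : 0 ≤ pnorm 1 g := by
  rw [pnorm_one]
  exact Finset.sum_nonneg fun d _ => abs_nonneg _

private lemma abs_eval_le {g : MvPolynomial (Idx N) ℝ} {m : ℕ} (hg : g.IsHomogeneous m)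
    (w : Idx N → ℝ) (M : ℝ) (hM : 0 ≤ M) (hw : ∀ i, |w i| ≤ M) :
    |MvPolynomial.eval w g| ≤ pnorm 1 g * M ^ m := by
  rw [MvPolynomial.eval_eq', pnorm_one, Finset.sum_mul]
  refine le_trans (Finset.abs_sum_le_sum_abs _ _) (Finset.sum_le_sum fun d hd => ?_)
  rw [abs_mul]
  apply mul_le_mul_of_nonneg_left _ (abs_nonneg _)
  rw [Finset.abs_prod]
  calc ∏ i, |w i ^ d i| = ∏ i, |w i| ^ d i := by simp [abs_pow]
    _ ≤ ∏ i, M ^ d i :=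
        Finset.prod_le_prod (fun i _ => by positivity)
          (fun i _ => pow_le_pow_left₀ (abs_nonneg _) (hw i) _)
    _ = M ^ (∑ i : Idx N, d i) := Finset.prod_pow_eq_pow_sum _ _ _
    _ = M ^ m := by rw [support_degree hg hd]

private lemma sum_pow_le {α : Type*} (s : Finset α) (a : α → ℝ) (ha : ∀ i ∈ s, 0 ≤ a i)
    {r : ℕ} (hr : r ≠ 0) : ∑ i ∈ s, a i ^ r ≤ (∑ i ∈ s, a i) ^ r := by
  classical
  induction s using Finset.induction_on with
  | empty => simp [zero_pow hr]
  | @insert x s hx ih =>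
    rw [Finset.sum_insert hx, Finset.sum_insert hx]
    have h1 : ∑ i ∈ s, a i ^ r ≤ (∑ i ∈ s, a i) ^ r :=
      ih fun i hi => ha i (Finset.mem_insert_of_mem hi)
    refine le_trans (add_le_add_right h1 _) ?_
    exact pow_add_pow_le (ha x (Finset.mem_insert_self x s))
      (Finset.sum_nonneg fun i hi => ha i (Finset.mem_insert_of_mem hi)) hr

private lemma amgm {r : ℕ} (hr : r ≠ 0) (a : Idx N → ℝ) (ha : ∀ i, 0 ≤ a i)
    (d : Idx N →₀ ℕ) (hd : ∑ i : Idx N, d i = r) :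
    ∏ i, a i ^ d i ≤ ∑ i, ((d i : ℝ) / r) * a i ^ r := by
  have hrR : (r : ℝ) ≠ 0 := Nat.cast_ne_zero.mpr hr
  have hw1 : ∑ i ∈ Finset.univ, ((d i : ℝ) / r) = 1 := by
    rw [← Finset.sum_div]
    rw [show (∑ i : Idx N, ((d i : ℕ) : ℝ)) = ((∑ i : Idx N, d i : ℕ) : ℝ) by push_cast; rfl,
      hd]
    exact div_self hrR
  have key := Real.geom_mean_le_arith_mean_weighted Finset.univ (fun i => (d i : ℝ) / r)
    (fun i => a i ^ r) (fun i _ => div_nonneg (Nat.cast_nonneg _) (Nat.cast_nonneg _)) hw1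
    (fun i _ => pow_nonneg (ha i) r)
  have hpt : ∀ i : Idx N, a i ^ d i = (a i ^ r) ^ (((d i : ℝ) / r) : ℝ) := by
    intro i
    rw [← Real.rpow_natCast (a i) r, ← Real.rpow_mul (ha i), mul_comm,
      div_mul_cancel₀ _ hrR, Real.rpow_natCast]
  calc ∏ i, a i ^ d i = ∏ i, (a i ^ r) ^ (((d i : ℝ) / r) : ℝ) :=
        Finset.prod_congr rfl fun i _ => hpt i
    _ ≤ ∑ i, ((d i : ℝ) / r) * a i ^ r := key

private lemma euclid_sum_apply {ι : Type*} (s : Finset ι)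
    (F : ι → EuclideanSpace ℝ (Fin N)) (j : Fin N) :
    (∑ d ∈ s, F d) j = ∑ d ∈ s, F d j := by
  classical
  induction s using Finset.induction_on with
  | empty => rfl
  | @insert x s hx ih =>
    rw [Finset.sum_insert hx, Finset.sum_insert hx, ← ih]
    rfl

private lemma sum_sq_eval_le {g : MvPolynomial (Idx N) ℝ} {r : ℕ} (hr : r ≠ 0)
    (hg : g.IsHomogeneous r) (z : Idx N → ℝ) :
    ∑ j : Fin N, (MvPolynomial.eval (z ∘ shf j) g) ^ 2
      ≤ (pnorm 1 g) ^ 2 * (∑ l, z l ^ 2) ^ r := by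
  set S : ℝ := ∑ l, z l ^ 2 with hS
  have hS0 : 0 ≤ S := Finset.sum_nonneg fun l _ => sq_nonneg _
  set V : (Idx N →₀ ℕ) → EuclideanSpace ℝ (Fin N) :=
    fun d => WithLp.toLp 2 (fun j => ∏ i, z (shf j i) ^ d i) with hV
  -- each basic vector has squared norm at most S ^ r
  have hVle : ∀ d ∈ g.support, ‖V d‖ ≤ Real.sqrt (S ^ r) := by
    intro d hd
    rw [EuclideanSpace.norm_eq]
    apply Real.sqrt_le_sqrt
    have hstep : ∀ j : Fin N,
        ‖V d j‖ ^ 2 ≤ ∑ i, ((d i : ℝ) / r) * (z (shf j i) ^ 2) ^ r := by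
      intro j
      have : ‖V d j‖ ^ 2 = ∏ i, (z (shf j i) ^ 2) ^ d i := by
        rw [Real.norm_eq_abs, sq_abs, hV]
        simp only
        rw [← Finset.prod_pow]
        apply Finset.prod_congr rfl
        intro i _
        ring
      rw [this]
      exact amgm hr (fun i => z (shf j i) ^ 2) (fun i => sq_nonneg _) d (support_degree hg hd)
    calc ∑ j : Fin N, ‖V d j‖ ^ 2
        ≤ ∑ j : Fin N, ∑ i, ((d i : ℝ) / r) * (z (shf j i) ^ 2) ^ r :=
          Finset.sum_le_sum fun j _ => hstep j
      _ = ∑ i, ((d i : ℝ) / r) * ∑ j : Fin N, (z (shf j i) ^ 2) ^ r := by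
          rw [Finset.sum_comm]
          exact Finset.sum_congr rfl fun i _ => by rw [Finset.mul_sum]
      _ ≤ ∑ i, ((d i : ℝ) / r) * ∑ l : Idx N, (z l ^ 2) ^ r := by
          apply Finset.sum_le_sum
          intro i _
          apply mul_le_mul_of_nonneg_left _ (by positivity)
          -- the map j ↦ shf j i is injective
          have hinj : Function.Injective (fun j : Fin N => shf j i) := by
            intro j1 j2 hj
            cases i with
            | inl a =>
              exact add_left_cancel
                (Sum.inl.inj (show Sum.inl (a + j1) = Sum.inl (a + j2) from hj))
            | inr a =>
              exact add_left_cancel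
                (Sum.inr.inj (show Sum.inr (a + j1) = Sum.inr (a + j2) from hj))
          calc ∑ j : Fin N, (z (shf j i) ^ 2) ^ r
              = ∑ l ∈ Finset.univ.image (fun j : Fin N => shf j i), (z l ^ 2) ^ r := by
                rw [Finset.sum_image fun j1 _ j2 _ hj => hinj hj]
            _ ≤ ∑ l : Idx N, (z l ^ 2) ^ r :=
                Finset.sum_le_sum_of_subset_of_nonneg (Finset.subset_univ _)
                  fun l _ _ => by positivity
      _ ≤ (∑ i, ((d i : ℝ) / r)) * ∑ l : Idx N, (z l ^ 2) ^ r := by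
          rw [Finset.sum_mul]
      _ = ∑ l : Idx N, (z l ^ 2) ^ r := by
          rw [← Finset.sum_div,
            show (∑ i : Idx N, ((d i : ℕ) : ℝ)) = ((∑ i : Idx N, d i : ℕ) : ℝ) by
              push_cast; rfl,
            support_degree hg hd, div_self (Nat.cast_ne_zero.mpr hr), one_mul]
      _ ≤ S ^ r := sum_pow_le _ _ (fun l _ => sq_nonneg _) hr
  -- triangle inequality in euclidean space
  have hGeq : (fun j : Fin N => MvPolynomial.eval (z ∘ shf j) g)
      = fun j => (∑ d ∈ g.support, g.coeff d • V d) j := by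
    funext j
    rw [euclid_sum_apply]
    rw [MvPolynomial.eval_eq']
    apply Finset.sum_congr rfl
    intro d _
    rfl
  have hnorm : ‖∑ d ∈ g.support, g.coeff d • V d‖ ≤ pnorm 1 g * Real.sqrt (S ^ r) := by
    refine le_trans (norm_sum_le _ _) ?_
    rw [pnorm_one, Finset.sum_mul]
    apply Finset.sum_le_sum
    intro d hd
    rw [norm_smul, Real.norm_eq_abs]
    exact mul_le_mul_of_nonneg_left (hVle d hd) (abs_nonneg _)
  have hfinal : ∑ j : Fin N, (MvPolynomial.eval (z ∘ shf j) g) ^ 2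
      = ‖∑ d ∈ g.support, g.coeff d • V d‖ ^ 2 := by
    rw [EuclideanSpace.norm_eq, Real.sq_sqrt (Finset.sum_nonneg fun j _ => by positivity)]
    apply Finset.sum_congr rfl
    intro j _
    rw [Real.norm_eq_abs, sq_abs, ← congrFun hGeq j]
  rw [hfinal]
  calc ‖∑ d ∈ g.support, g.coeff d • V d‖ ^ 2
      ≤ (pnorm 1 g * Real.sqrt (S ^ r)) ^ 2 :=
        pow_le_pow_left₀ (norm_nonneg _) hnorm 2
    _ = (pnorm 1 g) ^ 2 * S ^ r := by
        rw [mul_pow, Real.sq_sqrt (by positivity)]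

end AuxLemmas

/-- For `f` homogeneous of degree `r+1` (`r ≥ 1`) and `F = f^⊕`,
the operator norm of the Hamiltonian vector field satisfies `‖X_F‖_op ≤ |X_F|_1`,
i.e. `‖X_F(z)‖ ≤ |X_F|_1 ‖z‖^r` for all `z ≠ 0`, both for the supremum (`ℓ^∞`)
norm and for the euclidean (`ℓ²`) norm on `ℝ^{2N}`. -/
theorem opnorm_hamiltonian_field_le (N : ℕ) [NeZero N]
    (r : ℕ) (hr : 1 ≤ r)
    (f : MvPolynomial (Idx N) ℝ) (hf : f.IsHomogeneous (r + 1)) :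
    (∀ z : Idx N → ℝ, z ≠ 0 →
        ‖Xvec N (oplus N f) z‖ ≤ hamNorm N 1 (oplus N f) * ‖z‖ ^ r) ∧
    (∀ z : Idx N → ℝ, z ≠ 0 →
        _root_.enorm (Xvec N (oplus N f) z) ≤ hamNorm N 1 (oplus N f) * _root_.enorm z ^ r) := by
  classical
  have hr0 : r ≠ 0 := by omega
  set F := oplus N f with hF
  have hFh : F.IsHomogeneous (r + 1) := oplus_homog hf
  set g := pderiv (Sum.inr 0) F with hg
  set h := -pderiv (Sum.inl 0) F with hh
  have hgh : g.IsHomogeneous r := pderiv_homog _ hFh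
  have hhh : h.IsHomogeneous r := (pderiv_homog _ hFh).neg
  have hA : 0 ≤ pnorm 1 g := pnorm_one_nonneg g
  have hB : 0 ≤ pnorm 1 h := pnorm_one_nonneg h
  have hham : hamNorm N 1 F = pnorm 1 g + pnorm 1 h := rfl
  have hcompr : ∀ (j : Fin N) (z : Idx N → ℝ),
      Xvec N F z (Sum.inl j) = MvPolynomial.eval (z ∘ shf j) g := by
    intro j z
    show MvPolynomial.eval z (pderiv (Sum.inr j) F) = _
    rw [hF, pderiv_oplus_inr, eval_rename, ← hF, ← hg]
  have hcompl : ∀ (j : Fin N) (z : Idx N → ℝ),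
      Xvec N F z (Sum.inr j) = MvPolynomial.eval (z ∘ shf j) h := by
    intro j z
    show -MvPolynomial.eval z (pderiv (Sum.inl j) F) = _
    rw [← map_neg (MvPolynomial.eval z), hF, pderiv_oplus_inl, eval_rename, ← hF, ← hh]
  constructor
  · intro z _
    have hC : 0 ≤ (pnorm 1 g + pnorm 1 h) * ‖z‖ ^ r := by positivity
    rw [hham]
    apply (pi_norm_le_iff_of_nonneg hC).2
    intro l
    have hwb : ∀ (j : Fin N) (i : Idx N), |(z ∘ shf j) i| ≤ ‖z‖ := fun j i => by
      simpa using norm_le_pi_norm z (shf j i)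
    cases l with
    | inl j =>
      rw [hcompr j z, Real.norm_eq_abs]
      refine le_trans (abs_eval_le hgh _ ‖z‖ (norm_nonneg _) (hwb j)) ?_
      apply mul_le_mul_of_nonneg_right _ (by positivity)
      linarith
    | inr j =>
      rw [hcompl j z, Real.norm_eq_abs]
      refine le_trans (abs_eval_le hhh _ ‖z‖ (norm_nonneg _) (hwb j)) ?_
      apply mul_le_mul_of_nonneg_right _ (by positivity)
      linarith
  · intro z _
    rw [hham]
    unfold _root_.enorm
    have hsplit : ∑ l : Idx N, Xvec N F z l ^ 2
        = (∑ j : Fin N, (MvPolynomial.eval (z ∘ shf j) g) ^ 2)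
          + ∑ j : Fin N, (MvPolynomial.eval (z ∘ shf j) h) ^ 2 := by
      rw [Fintype.sum_sum_type]
      congr 1
      · exact Finset.sum_congr rfl fun j _ => by rw [hcompr j z]
      · exact Finset.sum_congr rfl fun j _ => by rw [hcompl j z]
    rw [hsplit]
    set S : ℝ := ∑ l, z l ^ 2 with hS
    have hS0 : 0 ≤ S := Finset.sum_nonneg fun l _ => sq_nonneg _
    have h1 := sum_sq_eval_le hr0 hgh z
    have h2 := sum_sq_eval_le hr0 hhh z
    rw [← hS] at h1 h2
    have hle : (∑ j : Fin N, (MvPolynomial.eval (z ∘ shf j) g) ^ 2)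
          + ∑ j : Fin N, (MvPolynomial.eval (z ∘ shf j) h) ^ 2
        ≤ (pnorm 1 g + pnorm 1 h) ^ 2 * S ^ r := by
      nlinarith [mul_nonneg (mul_nonneg hA hB) (pow_nonneg hS0 r)]
    refine le_trans (Real.sqrt_le_sqrt hle) ?_
    rw [Real.sqrt_mul (by positivity), Real.sqrt_sq (by positivity)]
    have hsq : Real.sqrt (S ^ r) = Real.sqrt S ^ r := by
      rw [← Real.sqrt_sq (pow_nonneg (Real.sqrt_nonneg S) r)]
      congr 1
      rw [← pow_mul, mul_comm, pow_mul, Real.sq_sqrt hS0]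
    rw [hsq]
end

section
/- Let F be a cyclically symmetric homogeneous polynomial of degree r on ℝ^N × ℝ^N whose seed f is of class D(C_f, σ). Then for every R > 0 one has |X_F|_R ≤ 4 r R^{r−1} C_f / (1 − e^{−σ})². -/
open MvPolynomial Finset Real

/-- `p` involves only the sites `0,…,m` (it is left aligned with interaction distance `≤ m`). -/
def SuppIn (N : ℕ) (m : ℕ) (p : MvPolynomial (Idx N) ℝ) : Prop :=
  ∀ d ∈ p.support, ∀ j : Fin N, (d (Sum.inl j) ≠ 0 ∨ d (Sum.inr j) ≠ 0) → (j : ℕ) ≤ m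

/-- the seed `f` is of class `D(C,σ)`: it decomposes as `f = ∑_{m≥0} f^(m)` with each `f^(m)`
left aligned, containing only monomials of interaction distance `≤ m`, and
`‖f^(m)‖₁ ≤ C e^{−σ m}`. -/
def ClassD (N : ℕ) (Cf σ : ℝ) (f : MvPolynomial (Idx N) ℝ) : Prop :=
  ∃ (M : ℕ) (comp : ℕ → MvPolynomial (Idx N) ℝ),
    f = ∑ m ∈ Finset.range M, comp m ∧
    (∀ m, M ≤ m → comp m = 0) ∧
    (∀ m, SuppIn N m (comp m)) ∧
    (∀ m, pnorm 1 (comp m) ≤ Cf * Real.exp (-σ * m))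

set_option linter.unusedSectionVars false

section Aux

variable {N : ℕ}

lemma pnorm_nonneg {R : ℝ} (hR : 0 ≤ R) (p : MvPolynomial (Idx N) ℝ) : 0 ≤ pnorm R p :=
  Finset.sum_nonneg fun _ _ => mul_nonneg (abs_nonneg _) (pow_nonneg hR _)

lemma pnorm_zero (R : ℝ) : pnorm R (0 : MvPolynomial (Idx N) ℝ) = 0 := by
  simp [pnorm]

lemma pnorm_eq_sum {R : ℝ} {p : MvPolynomial (Idx N) ℝ} {s : Finset (Idx N →₀ ℕ)}
    (h : p.support ⊆ s) :
    pnorm R p = ∑ d ∈ s, |p.coeff d| * R ^ (d.sum fun _ e => e) := by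
  rw [pnorm]
  exact Finset.sum_subset h fun d _ hd => by
    simp [MvPolynomial.notMem_support_iff.mp hd]

lemma pnorm_add_le {R : ℝ} (hR : 0 ≤ R) (p q : MvPolynomial (Idx N) ℝ) :
    pnorm R (p + q) ≤ pnorm R p + pnorm R q := by
  classical
  rw [pnorm_eq_sum (s := p.support ∪ q.support) (MvPolynomial.support_add),
      pnorm_eq_sum (s := p.support ∪ q.support) (p := p) Finset.subset_union_left,
      pnorm_eq_sum (s := p.support ∪ q.support) (p := q) Finset.subset_union_right,
      ← Finset.sum_add_distrib]
  refine Finset.sum_le_sum fun d _ => ?_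
  rw [MvPolynomial.coeff_add, ← add_mul]
  exact mul_le_mul_of_nonneg_right (abs_add_le _ _) (pow_nonneg hR _)

lemma pnorm_sum_le {R : ℝ} (hR : 0 ≤ R) {ι : Type*} (s : Finset ι)
    (p : ι → MvPolynomial (Idx N) ℝ) :
    pnorm R (∑ i ∈ s, p i) ≤ ∑ i ∈ s, pnorm R (p i) := by
  classical
  induction s using Finset.induction_on with
  | empty => simp [pnorm_zero]
  | insert a s h ih =>
    rw [Finset.sum_insert h, Finset.sum_insert h]
    exact (pnorm_add_le hR _ _).trans (by linarith)

lemma pnorm_neg (R : ℝ) (p : MvPolynomial (Idx N) ℝ) : pnorm R (-p) = pnorm R p := by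
  simp [pnorm, MvPolynomial.support_neg]

lemma pnorm_rename {R : ℝ} {φ : Idx N → Idx N} (hφ : Function.Injective φ)
    (p : MvPolynomial (Idx N) ℝ) :
    pnorm R (rename φ p) = pnorm R p := by
  classical
  rw [pnorm, pnorm, MvPolynomial.support_rename_of_injective hφ, Finset.sum_image
    (fun a _ b _ h => Finsupp.mapDomain_injective hφ h)]
  refine Finset.sum_congr rfl fun d _ => ?_
  rw [MvPolynomial.coeff_rename_mapDomain φ hφ]
  congr 1
  exact congrArg (R ^ ·) (Finsupp.sum_mapDomain_index (fun _ => rfl) (fun _ _ _ => rfl))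

lemma pnorm_monomial_le {R : ℝ} (hR : 0 ≤ R) (d : Idx N →₀ ℕ) (a : ℝ) :
    pnorm R (monomial d a) ≤ |a| * R ^ (d.sum fun _ e => e) := by
  classical
  rcases eq_or_ne a 0 with rfl | ha
  · rw [map_zero, pnorm_zero]
    positivity
  · rw [pnorm, MvPolynomial.support_monomial, if_neg ha, Finset.sum_singleton,
      MvPolynomial.coeff_monomial, if_pos rfl]

lemma pderiv_eq_zero_of {i : Idx N} {p : MvPolynomial (Idx N) ℝ}
    (h : ∀ d ∈ p.support, d i = 0) : pderiv i p = 0 := by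
  conv_lhs => rw [p.as_sum]
  rw [map_sum]
  refine Finset.sum_eq_zero fun d hd => ?_
  rw [pderiv_monomial, h d hd, Nat.cast_zero, mul_zero, map_zero]

lemma degree_of_mem_support {r : ℕ} {p : MvPolynomial (Idx N) ℝ} (hp : p.IsHomogeneous r)
    {d : Idx N →₀ ℕ} (hd : d ∈ p.support) : (d.sum fun _ e => e) = r := by
  have := hp (MvPolynomial.mem_support_iff.mp hd)
  rw [show (d.sum fun _ e => e) = Finsupp.degree d from rfl, Finsupp.degree_eq_weight_one]
  exact this

lemma pnorm_pderiv_le {R : ℝ} (hR : 0 ≤ R) {r : ℕ} {p : MvPolynomial (Idx N) ℝ}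
    (hp : p.IsHomogeneous r) (i : Idx N) :
    pnorm R (pderiv i p) ≤ r * R ^ (r - 1) * pnorm 1 p := by
  classical
  conv_lhs => rw [p.as_sum]
  rw [map_sum]
  refine (pnorm_sum_le hR _ _).trans ?_
  have h1 : r * R ^ (r - 1) * pnorm 1 p
      = ∑ d ∈ p.support, r * R ^ (r - 1) * |p.coeff d| := by
    rw [pnorm, Finset.mul_sum]
    simp
  rw [h1]
  refine Finset.sum_le_sum fun d hd => ?_
  rw [pderiv_monomial]
  refine (pnorm_monomial_le hR _ _).trans ?_
  rcases Nat.eq_zero_or_pos (d i) with h0 | h0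
  · rw [h0]
    simp only [Nat.cast_zero, mul_zero, abs_zero, zero_mul]
    positivity
  · have hdeg : (d.sum fun _ e => e) = r := degree_of_mem_support hp hd
    have hsingle : Finsupp.single i 1 ≤ d := Finsupp.single_le_iff.mpr h0
    have hr1 : (d i) ≤ r := by
      rw [← hdeg]
      exact Finset.single_le_sum (f := fun a => d a) (fun _ _ => Nat.zero_le _)
        (Finsupp.mem_support_iff.mpr h0.ne')
    have hdeg' : ((d - Finsupp.single i 1).sum fun _ e => e) = r - 1 := by
      have hadd : (d - Finsupp.single i 1) + Finsupp.single i 1 = d :=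
        tsub_add_cancel_of_le hsingle
      have h2 : ((d - Finsupp.single i 1) + Finsupp.single i 1).sum (fun _ e => e)
          = ((d - Finsupp.single i 1).sum fun _ e => e) + 1 := by
        rw [Finsupp.sum_add_index' (h := fun _ e => e) (fun _ => rfl) (fun _ _ _ => rfl),
          Finsupp.sum_single_index rfl]
      rw [hadd] at h2
      omega
    rw [hdeg', abs_mul, Nat.abs_cast]
    have h2 : (d i : ℝ) ≤ (r : ℝ) := by exact_mod_cast hr1
    have := mul_le_mul_of_nonneg_right h2 (abs_nonneg (p.coeff d))
    nlinarith [pow_nonneg hR (r - 1), abs_nonneg (p.coeff d), mul_le_mul_of_nonneg_right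
      (mul_le_mul_of_nonneg_right h2 (abs_nonneg (p.coeff d))) (pow_nonneg hR (r-1))]

end Aux

section Aux2

variable {N : ℕ} [NeZero N]

lemma tau_inj (c : Fin N) :
    Function.Injective (Sum.map (· + c) (· + c) : Idx N → Idx N) :=
  Function.Injective.sumMap (add_left_injective c) (add_left_injective c)

lemma pnorm_pderiv_tau_inr {R : ℝ} (f : MvPolynomial (Idx N) ℝ) (c : Fin N) :
    pnorm R (pderiv (Sum.inr 0) (rename (Sum.map (· + c) (· + c)) f))
      = pnorm R (pderiv (Sum.inr (-c)) f) := by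
  have h := pderiv_rename (tau_inj c) (Sum.inr (-c) : Idx N) f
  simp only [Sum.map_inr, neg_add_cancel] at h
  rw [h, pnorm_rename (tau_inj c)]

lemma pnorm_pderiv_tau_inl {R : ℝ} (f : MvPolynomial (Idx N) ℝ) (c : Fin N) :
    pnorm R (pderiv (Sum.inl 0) (rename (Sum.map (· + c) (· + c)) f))
      = pnorm R (pderiv (Sum.inl (-c)) f) := by
  have h := pderiv_rename (tau_inj c) (Sum.inl (-c) : Idx N) f
  simp only [Sum.map_inl, neg_add_cancel] at h
  rw [h, pnorm_rename (tau_inj c)]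

open Fin.CommRing in
lemma sum_shift_eq (g : Fin N → ℝ) :
    ∑ l ∈ Finset.range N, g (-(((l : ℤ) + 1 : ℤ) : Fin N)) = ∑ j : Fin N, g j := by
  rw [← Fin.sum_univ_eq_sum_range (fun l => g (-(((l : ℤ) + 1 : ℤ) : Fin N)))]
  have he : ∀ i : Fin N, (-((((i : ℕ) : ℤ) + 1 : ℤ) : Fin N)) = -(i + 1) := by
    intro i
    congr 1
    push_cast
    simp
  simp_rw [he]
  exact Equiv.sum_comp ((Equiv.addRight (1 : Fin N)).trans (Equiv.neg (Fin N))) g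

open Fin.CommRing in
lemma pnorm_pderiv_oplus_inr {R : ℝ} (hR : 0 ≤ R) (f : MvPolynomial (Idx N) ℝ) :
    pnorm R (pderiv (Sum.inr 0) (oplus N f)) ≤ ∑ j : Fin N, pnorm R (pderiv (Sum.inr j) f) := by
  rw [oplus, map_sum]
  refine (pnorm_sum_le hR _ _).trans (le_of_eq ?_)
  calc ∑ l ∈ Finset.range N, pnorm R (pderiv (Sum.inr 0) (tauPow N ((l : ℤ) + 1) f))
      = ∑ l ∈ Finset.range N, pnorm R (pderiv (Sum.inr (-((((l : ℤ) + 1 : ℤ)) : Fin N))) f) :=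
        Finset.sum_congr rfl fun l _ => by
          simp only [tauPow]
          exact pnorm_pderiv_tau_inr f _
    _ = ∑ j : Fin N, pnorm R (pderiv (Sum.inr j) f) :=
        sum_shift_eq (fun j => pnorm R (pderiv (Sum.inr j) f))

open Fin.CommRing in
lemma pnorm_pderiv_oplus_inl {R : ℝ} (hR : 0 ≤ R) (f : MvPolynomial (Idx N) ℝ) :
    pnorm R (pderiv (Sum.inl 0) (oplus N f)) ≤ ∑ j : Fin N, pnorm R (pderiv (Sum.inl j) f) := by
  rw [oplus, map_sum]
  refine (pnorm_sum_le hR _ _).trans (le_of_eq ?_)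
  calc ∑ l ∈ Finset.range N, pnorm R (pderiv (Sum.inl 0) (tauPow N ((l : ℤ) + 1) f))
      = ∑ l ∈ Finset.range N, pnorm R (pderiv (Sum.inl (-((((l : ℤ) + 1 : ℤ)) : Fin N))) f) :=
        Finset.sum_congr rfl fun l _ => by
          simp only [tauPow]
          exact pnorm_pderiv_tau_inl f _
    _ = ∑ j : Fin N, pnorm R (pderiv (Sum.inl j) f) :=
        sum_shift_eq (fun j => pnorm R (pderiv (Sum.inl j) f))

end Aux2

section Aux3

variable {N : ℕ}

lemma card_filter_le (m : ℕ) :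
    (Finset.univ.filter (fun j : Fin N => (j : ℕ) ≤ m)).card ≤ m + 1 := by
  have := Finset.card_le_card_of_injOn (f := fun j : Fin N => (j : ℕ))
    (s := Finset.univ.filter (fun j : Fin N => (j : ℕ) ≤ m)) (t := Finset.range (m + 1))
    (fun j hj => Finset.mem_range.mpr (Nat.lt_succ_of_le (Finset.mem_filter.mp hj).2))
    (fun a _ b _ h => Fin.val_injective h)
  rwa [Finset.card_range] at this

lemma site_sum_le {R : ℝ} (hR : 0 ≤ R) {r m : ℕ} {p : MvPolynomial (Idx N) ℝ}
    (hp : p.IsHomogeneous r) (hm : SuppIn N m p) :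
    ∑ j : Fin N, (pnorm R (pderiv (Sum.inl j) p) + pnorm R (pderiv (Sum.inr j) p))
      ≤ 2 * (m + 1) * (r * R ^ (r - 1) * pnorm 1 p) := by
  classical
  set B : ℝ := r * R ^ (r - 1) * pnorm 1 p with hB
  have hB0 : 0 ≤ B := by
    have := pnorm_nonneg (zero_le_one) p
    positivity
  rw [← Finset.sum_filter_add_sum_filter_not Finset.univ (fun j : Fin N => (j : ℕ) ≤ m)]
  have hzero : ∑ j ∈ Finset.univ.filter (fun j : Fin N => ¬ (j : ℕ) ≤ m),
      (pnorm R (pderiv (Sum.inl j) p) + pnorm R (pderiv (Sum.inr j) p)) = 0 := by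
    refine Finset.sum_eq_zero fun j hj => ?_
    simp only [Finset.mem_filter, not_le] at hj
    have hl : pderiv (Sum.inl j) p = 0 := pderiv_eq_zero_of fun d hd => by
      by_contra h
      exact absurd (hm d hd j (Or.inl h)) (Nat.not_le.mpr hj.2)
    have hr' : pderiv (Sum.inr j) p = 0 := pderiv_eq_zero_of fun d hd => by
      by_contra h
      exact absurd (hm d hd j (Or.inr h)) (Nat.not_le.mpr hj.2)
    simp [hl, hr', pnorm_zero]
  rw [hzero, add_zero]
  have hbound : ∑ j ∈ Finset.univ.filter (fun j : Fin N => (j : ℕ) ≤ m),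
      (pnorm R (pderiv (Sum.inl j) p) + pnorm R (pderiv (Sum.inr j) p))
      ≤ (Finset.univ.filter (fun j : Fin N => (j : ℕ) ≤ m)).card * (2 * B) := by
    rw [Finset.card_eq_sum_ones, Nat.cast_sum, Finset.sum_mul]
    refine Finset.sum_le_sum fun j _ => ?_
    have h1 := pnorm_pderiv_le hR hp (Sum.inl j)
    have h2 := pnorm_pderiv_le hR hp (Sum.inr j)
    rw [← hB] at h1 h2
    push_cast
    linarith
  refine hbound.trans ?_
  have hc : ((Finset.univ.filter (fun j : Fin N => (j : ℕ) ≤ m)).card : ℝ) ≤ (m + 1 : ℝ) := by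
    exact_mod_cast card_filter_le m
  nlinarith

lemma geom_bound {x : ℝ} (hx0 : 0 ≤ x) (hx1 : x < 1) (M : ℕ) :
    ∑ m ∈ Finset.range M, (m + 1 : ℝ) * x ^ m ≤ 1 / (1 - x) ^ 2 := by
  have h : HasSum (fun n : ℕ => (((n + 1).choose 1 : ℕ) : ℝ) * x ^ n) (1 / (1 - x) ^ 2) := by
    simpa using hasSum_choose_mul_geometric_of_norm_lt_one 1
      (r := x) (by rwa [Real.norm_eq_abs, abs_of_nonneg hx0])
  have h' : HasSum (fun n : ℕ => (n + 1 : ℝ) * x ^ n) (1 / (1 - x) ^ 2) := by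
    convert h using 2 with n
    simp [Nat.choose_one_right]
  exact sum_le_hasSum _ (fun n _ => by positivity) h'

end Aux3

/-- If `F = f^⊕` is a cyclically symmetric homogeneous polynomial of
degree `r` whose seed `f` is of class `D(C_f, σ)`, then for every `R > 0`
`|X_F|_R ≤ 4 r R^{r−1} C_f / (1 − e^{−σ})²`. -/
theorem hamNorm_of_classD (N : ℕ) [NeZero N]
    (r : ℕ) (f : MvPolynomial (Idx N) ℝ) (hf : f.IsHomogeneous r)
    (Cf σ : ℝ) (hCf : 0 < Cf) (hσ : 0 < σ) (hD : ClassD N Cf σ f)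
    (R : ℝ) (hR : 0 < R) :
    hamNorm N R (oplus N f) ≤ 4 * r * R ^ (r - 1) * Cf / (1 - Real.exp (-σ)) ^ 2 := by
  classical
  obtain ⟨M, comp, hsum, -, hsupp, hnorm⟩ := hD
  have hR0 : (0:ℝ) ≤ R := hR.le
  set x : ℝ := Real.exp (-σ) with hxdef
  have hx0 : 0 < x := Real.exp_pos _
  have hx1 : x < 1 := Real.exp_lt_one_iff.mpr (by linarith)
  -- the homogeneous components of degree r
  set comp' : ℕ → MvPolynomial (Idx N) ℝ := fun m => homogeneousComponent r (comp m) with hcomp'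
  have hf' : f = ∑ m ∈ Finset.range M, comp' m := by
    have h2 : homogeneousComponent r f = f := by
      rw [homogeneousComponent_of_mem ((mem_homogeneousSubmodule r f).mpr hf), if_pos rfl]
    calc f = homogeneousComponent r f := h2.symm
      _ = ∑ m ∈ Finset.range M, comp' m := by rw [hsum, map_sum]
  have hhom : ∀ m, (comp' m).IsHomogeneous r := fun m => homogeneousComponent_isHomogeneous r (comp m)
  have hsuppsub : ∀ m, (comp' m).support ⊆ (comp m).support := by
    intro m d hd
    rw [MvPolynomial.mem_support_iff] at hd ⊢
    rw [hcomp', coeff_homogeneousComponent] at hd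
    intro h
    apply hd
    split_ifs <;> simp [h]
  have hsupp' : ∀ m, SuppIn N m (comp' m) := fun m d hd j hj =>
    hsupp m d (hsuppsub m hd) j hj
  have hnorm' : ∀ m, pnorm 1 (comp' m) ≤ Cf * x ^ m := by
    intro m
    have hle : pnorm 1 (comp' m) ≤ pnorm 1 (comp m) := by
      rw [pnorm_eq_sum (hsuppsub m), pnorm]
      refine Finset.sum_le_sum fun d _ => ?_
      have habs : |(comp' m).coeff d| ≤ |(comp m).coeff d| := by
        rw [hcomp']
        show |coeff d (homogeneousComponent r (comp m))| ≤ _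
        rw [coeff_homogeneousComponent]
        split_ifs <;> simp
      exact mul_le_mul_of_nonneg_right habs (by positivity)
    refine hle.trans ((hnorm m).trans (le_of_eq ?_))
    rw [hxdef, ← Real.exp_nat_mul]
    ring_nf
  -- bound the two pderiv pnorms
  have key : ∀ v : Idx N, ∀ m,
      pnorm R (pderiv v (comp' m)) ≤ r * R ^ (r - 1) * pnorm 1 (comp' m) :=
    fun v m => pnorm_pderiv_le hR0 (hhom m) v
  have main : hamNorm N R (oplus N f)
      ≤ ∑ m ∈ Finset.range M, 2 * (m + 1) * (r * R ^ (r - 1) * pnorm 1 (comp' m)) := by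
    rw [hamNorm, pnorm_neg]
    have h1 := pnorm_pderiv_oplus_inr hR0 f
    have h2 := pnorm_pderiv_oplus_inl hR0 f
    have h3 : ∀ j : Fin N, ∀ v : Fin N → Idx N,
        pnorm R (pderiv (v j) f) ≤ ∑ m ∈ Finset.range M, pnorm R (pderiv (v j) (comp' m)) := by
      intro j v
      rw [hf', map_sum]
      exact pnorm_sum_le hR0 _ _
    calc pnorm R (pderiv (Sum.inr 0) (oplus N f)) + pnorm R (pderiv (Sum.inl 0) (oplus N f))
        ≤ (∑ j : Fin N, pnorm R (pderiv (Sum.inr j) f))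
          + ∑ j : Fin N, pnorm R (pderiv (Sum.inl j) f) := add_le_add h1 h2
      _ ≤ (∑ j : Fin N, ∑ m ∈ Finset.range M, pnorm R (pderiv (Sum.inr j) (comp' m)))
          + ∑ j : Fin N, ∑ m ∈ Finset.range M, pnorm R (pderiv (Sum.inl j) (comp' m)) :=
          add_le_add (Finset.sum_le_sum fun j _ => h3 j Sum.inr)
            (Finset.sum_le_sum fun j _ => h3 j Sum.inl)
      _ = ∑ m ∈ Finset.range M, ∑ j : Fin N,
            (pnorm R (pderiv (Sum.inl j) (comp' m)) + pnorm R (pderiv (Sum.inr j) (comp' m))) := by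
          rw [Finset.sum_comm, Finset.sum_comm (s := Finset.univ)]
          rw [← Finset.sum_add_distrib]
          refine Finset.sum_congr rfl fun m _ => ?_
          rw [← Finset.sum_add_distrib]
          exact Finset.sum_congr rfl fun j _ => add_comm _ _
      _ ≤ ∑ m ∈ Finset.range M, 2 * (m + 1) * (r * R ^ (r - 1) * pnorm 1 (comp' m)) :=
          Finset.sum_le_sum fun m _ => site_sum_le hR0 (hhom m) (hsupp' m)
  refine main.trans ?_
  have step2 : ∑ m ∈ Finset.range M, 2 * ((m:ℝ) + 1) * (r * R ^ (r - 1) * pnorm 1 (comp' m))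
      ≤ 2 * r * R ^ (r - 1) * Cf * ∑ m ∈ Finset.range M, ((m:ℝ) + 1) * x ^ m := by
    rw [Finset.mul_sum]
    refine Finset.sum_le_sum fun m _ => ?_
    have h4 := hnorm' m
    have h5 : (0:ℝ) ≤ 2 * ((m:ℝ) + 1) * (r * R ^ (r - 1)) := by positivity
    calc 2 * ((m:ℝ) + 1) * (r * R ^ (r - 1) * pnorm 1 (comp' m))
        ≤ 2 * ((m:ℝ) + 1) * (r * R ^ (r - 1) * (Cf * x ^ m)) := by
          rcases Nat.eq_zero_or_pos r with rfl | hrp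
          · simp
          · refine mul_le_mul_of_nonneg_left ?_ (by positivity)
            exact mul_le_mul_of_nonneg_left h4 (by positivity)
      _ = 2 * r * R ^ (r - 1) * Cf * (((m:ℝ) + 1) * x ^ m) := by ring
  refine step2.trans ?_
  have hgeom := geom_bound hx0.le hx1 M
  have hpos : (0:ℝ) ≤ 2 * r * R ^ (r - 1) * Cf := by positivity
  have h6 : 2 * r * R ^ (r - 1) * Cf * ∑ m ∈ Finset.range M, ((m:ℝ) + 1) * x ^ m
      ≤ 2 * r * R ^ (r - 1) * Cf * (1 / (1 - x) ^ 2) :=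
    mul_le_mul_of_nonneg_left hgeom hpos
  refine h6.trans ?_
  rw [div_eq_mul_inv, div_eq_mul_inv]
  have hinv : (0:ℝ) ≤ ((1 - x) ^ 2)⁻¹ := by positivity
  have : 2 * r * R ^ (r - 1) * Cf ≤ 4 * r * R ^ (r - 1) * Cf := by nlinarith [hpos]
  nlinarith [mul_le_mul_of_nonneg_right this hinv]
end
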